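/- Any homomorphic image of a classical Hilbert module is a classical Hilbert module; equivalently, if M is a classical Hilbert R-module and N ≤ M, then M/N is a classical Hilbert R-module. -/

import Mathlib

variable {R : Type*} [CommRing R] {M : Type*} [AddCommGroup M] [Module R M]

/-- A proper submodule `P` is classical prime if `a • b • m ∈ P` implies
`a • m ∈ P` or `b • m ∈ P`. -/
def IsClassicalPrime (P : Submodule R M) : Prop :=
  P ≠ ⊤ ∧ ∀ (a b : R) (m : M), a • b • m ∈ P → a • m ∈ P ∨ b • m ∈ P

/-- A proper submodule `P` is prime if `a • m ∈ P` implies `m ∈ P` or `a • M ⊆ P`. -/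
def IsPrimeSubmodule (P : Submodule R M) : Prop :=
  P ≠ ⊤ ∧ ∀ (a : R) (m : M), a • m ∈ P → m ∈ P ∨ ∀ x : M, a • x ∈ P

/-- The ideal `(P : m) = {r : R | r • m ∈ P}`. -/
def colonElem (P : Submodule R M) (m : M) : Ideal R :=
  P.comap (LinearMap.toSpanSingleton R M m)

/-- `P` is an intersection of maximal submodules. -/
def IsIntersectionOfMaximal (P : Submodule R M) : Prop :=
  ∃ S : Set (Submodule R M), (∀ N ∈ S, IsCoatom N) ∧ P = sInf S

/-- `M` is a classical Hilbert `R`-module. -/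
def IsClHilbert (R M : Type*) [CommRing R] [AddCommGroup M] [Module R M] : Prop :=
  ∀ P : Submodule R M, IsClassicalPrime P → IsIntersectionOfMaximal P

theorem stmt9 (h : IsClHilbert R M) (N : Submodule R M) :
    IsClHilbert R (M ⧸ N) := by
  intro P hP
  set Q : Submodule R M := P.comap N.mkQ with hQ
  have hNQ : N ≤ Q := fun x hx => by
    simp only [hQ, Submodule.mem_comap, Submodule.mkQ_apply]
    rw [(Submodule.Quotient.mk_eq_zero N).2 hx]
    exact P.zero_mem
  -- Q is classical prime
  have hQprime : IsClassicalPrime Q := by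
    constructor
    · intro htop
      apply hP.1
      rw [eq_top_iff]
      intro y _
      obtain ⟨x, rfl⟩ := N.mkQ_surjective y
      have : x ∈ Q := htop ▸ Submodule.mem_top
      exact this
    · intro a b m hm
      have : a • b • (N.mkQ m) ∈ P := by
        simpa [hQ] using hm
      rcases hP.2 a b (N.mkQ m) this with h1 | h1
      · left; simpa [hQ] using h1
      · right; simpa [hQ] using h1
  obtain ⟨S₀, hS₀coatom, hS₀⟩ := h Q hQprime
  -- use all coatoms containing Q
  set S : Set (Submodule R M) := {N' | IsCoatom N' ∧ Q ≤ N'} with hS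
  have hQS : Q = sInf S := by
    apply le_antisymm
    · exact le_sInf fun N' hN' => hN'.2
    · have hsub : S₀ ⊆ S := fun N' hN' =>
        ⟨hS₀coatom N' hN', hS₀ ▸ sInf_le hN'⟩
      calc sInf S ≤ sInf S₀ := sInf_le_sInf hsub
        _ = Q := hS₀.symm
  refine ⟨Submodule.map N.mkQ '' S, ?_, ?_⟩
  · rintro _ ⟨N', hN', rfl⟩
    have hNle : N ≤ N' := le_trans hNQ hN'.2
    have hcm : Submodule.comap N.mkQ (Submodule.map N.mkQ N') = N' := by
      rw [Submodule.comap_map_eq, Submodule.ker_mkQ, sup_eq_left.2 hNle]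
    constructor
    · intro htop
      apply hN'.1.1
      rw [← hcm, htop, Submodule.comap_top]
    · intro Q' hlt
      have h1 : N' ≤ Submodule.comap N.mkQ Q' := hcm ▸ Submodule.comap_mono hlt.le
      have h2 : N' ≠ Submodule.comap N.mkQ Q' := by
        intro heq
        apply hlt.ne
        rw [heq] at hcm ⊢
        rw [Submodule.map_comap_eq_of_surjective N.mkQ_surjective]
      have := hN'.1.2 _ (lt_of_le_of_ne h1 h2)
      rw [eq_top_iff]
      intro y _
      obtain ⟨x, rfl⟩ := N.mkQ_surjective y
      exact (this ▸ Submodule.mem_top : x ∈ Submodule.comap N.mkQ Q')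
  · apply le_antisymm
    · apply le_sInf
      rintro _ ⟨N', hN', rfl⟩
      have : P = Submodule.map N.mkQ Q :=
        (Submodule.map_comap_eq_of_surjective N.mkQ_surjective P).symm
      rw [this]
      exact Submodule.map_mono hN'.2
    · intro y hy
      obtain ⟨x, rfl⟩ := N.mkQ_surjective y
      have hx : x ∈ Q := by
        rw [hQS]
        apply Submodule.mem_sInf.2
        intro N' hN'
        have hNle : N ≤ N' := le_trans hNQ hN'.2
        have : N.mkQ x ∈ Submodule.map N.mkQ N' :=
          Submodule.mem_sInf.1 hy _ ⟨N', hN', rfl⟩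
        have hcm : Submodule.comap N.mkQ (Submodule.map N.mkQ N') = N' := by
          rw [Submodule.comap_map_eq, Submodule.ker_mkQ, sup_eq_left.2 hNle]
        exact hcm ▸ this
      exact hx
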